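/- Let (u_n) ⊂ L^r(Ω) be a sequence converging to u in L^r(Ω), and let (v_n) be a bounded sequence in L^p(Ω; ℝ^N). Then ∫_Ω f(x, u_n(x), v_n(x)) (u_n(x) − u(x)) dx → 0 as n → ∞. -/

import Mathlib

open MeasureTheory Filter
open scoped ENNReal NNReal

theorem stmt_11 {N : ℕ} (hN : 1 ≤ N) (Ω : Set (EuclideanSpace ℝ (Fin N)))
    (hΩo : IsOpen Ω) (hΩb : Bornology.IsBounded Ω)
    (p r : ℝ) (hp : 1 < p) (hr : 1 < r)
    (f : EuclideanSpace ℝ (Fin N) → ℝ → EuclideanSpace ℝ (Fin N) → ℝ)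
    (hfmeas : ∀ (s : ℝ) (ξ : EuclideanSpace ℝ (Fin N)), Measurable (fun x => f x s ξ))
    (hfcont : ∀ᵐ x ∂(volume.restrict Ω),
      Continuous (fun sξ : ℝ × EuclideanSpace ℝ (Fin N) => f x sξ.1 sξ.2))
    (a₁ a₂ : ℝ) (ha₁ : 0 ≤ a₁) (ha₂ : 0 ≤ a₂)
    (α₁ : EuclideanSpace ℝ (Fin N) → ℝ)
    (hα₁ : MemLp α₁ (ENNReal.ofReal (r / (r - 1))) (volume.restrict Ω))
    (hgrowth : ∀ᵐ x ∂(volume.restrict Ω), ∀ (s : ℝ) (ξ : EuclideanSpace ℝ (Fin N)),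
      |f x s ξ| ≤ a₁ * ‖ξ‖ ^ (p * (r - 1) / r) + a₂ * |s| ^ (r - 1) + α₁ x)
    (u : ℕ → EuclideanSpace ℝ (Fin N) → ℝ) (u₀ : EuclideanSpace ℝ (Fin N) → ℝ)
    (hu : ∀ n, MemLp (u n) (ENNReal.ofReal r) (volume.restrict Ω))
    (hu₀ : MemLp u₀ (ENNReal.ofReal r) (volume.restrict Ω))
    (huconv : Tendsto (fun n => eLpNorm (u n - u₀) (ENNReal.ofReal r) (volume.restrict Ω))
      atTop (nhds 0))
    (v : ℕ → EuclideanSpace ℝ (Fin N) → EuclideanSpace ℝ (Fin N))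
    (hv : ∀ n, MemLp (v n) (ENNReal.ofReal p) (volume.restrict Ω))
    (hvbdd : ∃ C : ℝ≥0, ∀ n, eLpNorm (v n) (ENNReal.ofReal p) (volume.restrict Ω) ≤ C) :
    Tendsto (fun n => ∫ x in Ω, f x (u n x) (v n x) * (u n x - u₀ x)) atTop (nhds 0) := by
  classical
  set μ := volume.restrict Ω with hμ
  have hr1 : (0:ℝ) < r - 1 := by linarith
  have hr0 : (0:ℝ) < r := by linarith
  set q : ℝ := r / (r - 1) with hqdef
  have hq0 : 0 < q := div_pos hr0 hr1
  have hq1 : 1 < q := by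
    rw [hqdef, lt_div_iff₀ hr1]; linarith
  set Q : ℝ≥0∞ := ENNReal.ofReal q with hQdef
  set R : ℝ≥0∞ := ENNReal.ofReal r with hRdef
  have hQ0 : Q ≠ 0 := by
    simp [hQdef, ENNReal.ofReal_eq_zero, not_le, hq0]
  have hQt : Q ≠ ∞ := ENNReal.ofReal_ne_top
  have hQ1 : 1 ≤ Q := ENNReal.one_le_ofReal.2 hq1.le
  have hR1 : 1 ≤ R := ENNReal.one_le_ofReal.2 hr.le
  -- exponent identities
  have hqr : q * (r - 1) = r := by
    rw [hqdef]; field_simp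
  have hqp : q * (p / q) = p := by
    field_simp
  have hpq_pos : 0 < p / q := div_pos (by linarith) hq0
  have hexp : p * (r - 1) / r = p / q := by
    rw [hqdef]; field_simp
  have hQmul1 : Q * ENNReal.ofReal (p / q) = ENNReal.ofReal p := by
    rw [hQdef, ← ENNReal.ofReal_mul hq0.le, hqp]
  have hQmul2 : Q * ENNReal.ofReal (r - 1) = R := by
    rw [hQdef, hRdef, ← ENNReal.ofReal_mul hq0.le, hqr]
  have hconj : 1 / (1 : ℝ≥0∞) = 1 / Q + 1 / R := by
    rw [hQdef, hRdef]
    rw [← ENNReal.ofReal_one, ← ENNReal.ofReal_div_of_pos hq0,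
      ← ENNReal.ofReal_div_of_pos hr0, ← ENNReal.ofReal_add (by positivity) (by positivity)]
    rw [ENNReal.ofReal_one]
    congr 1
    rw [hqdef]
    field_simp
    rw [sub_add_cancel, div_self hr0.ne']; simp
  -- measurability of x ↦ f x (u n x) (v n x)
  obtain ⟨t, hts, htm, htnull⟩ :=
    exists_measurable_superset_of_null (μ := μ)
      (s := {x | ¬ Continuous (fun sξ : ℝ × EuclideanSpace ℝ (Fin N) => f x sξ.1 sξ.2)}) (ae_iff.1 hfcont)
  set f' : ℝ × EuclideanSpace ℝ (Fin N) → EuclideanSpace ℝ (Fin N) → ℝ := fun sξ x => if x ∈ t then 0 else f x sξ.1 sξ.2 with hf'def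
  have hf'cont : ∀ x, Continuous fun sξ : ℝ × EuclideanSpace ℝ (Fin N) => f' sξ x := by
    intro x
    by_cases hx : x ∈ t
    · simp only [hf'def, if_pos hx]; exact continuous_const
    · simp only [hf'def, if_neg hx]
      by_contra hc
      exact hx (hts hc)
  have hf'meas : ∀ sξ : ℝ × EuclideanSpace ℝ (Fin N), Measurable (f' sξ) := by
    intro sξ
    exact Measurable.ite htm measurable_const (hfmeas sξ.1 sξ.2)
  have hF' : Measurable (Function.uncurry f') :=
    measurable_uncurry_of_continuous_of_measurable hf'cont hf'meas
  have hFmeas : ∀ n, AEStronglyMeasurable (fun x => f x (u n x) (v n x)) μ := by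
    intro n
    have hum := (hu n).1
    have hvm := (hv n).1
    have humk := hum.stronglyMeasurable_mk.measurable
    have hvmk := hvm.stronglyMeasurable_mk.measurable
    have hmeas : Measurable (fun x => Function.uncurry f' ((hum.mk (u n) x, hvm.mk (v n) x), x)) := by
      exact hF'.comp ((humk.prodMk hvmk).prodMk measurable_id)
    have htae : ∀ᵐ x ∂μ, x ∉ t := by
      rw [ae_iff]; simpa using htnull
    refine ⟨_, hmeas.stronglyMeasurable, ?_⟩
    filter_upwards [hum.ae_eq_mk, hvm.ae_eq_mk, htae] with x hux hvx hxt
    simp only [Function.uncurry, hf'def, if_neg hxt, hux, hvx]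
  -- uniform bound on ‖u n‖_r
  obtain ⟨U, hUt, hUb⟩ : ∃ U : ℝ≥0∞, U ≠ ∞ ∧ ∀ n, eLpNorm (u n) R μ ≤ U := by
    have hev : ∀ᶠ n in atTop, eLpNorm (u n - u₀) R μ < 1 :=
      huconv.eventually_lt_const (by norm_num)
    obtain ⟨n₀, hn₀⟩ := eventually_atTop.1 hev
    set D : ℝ≥0∞ := ((Finset.range n₀).sup fun n => eLpNorm (u n - u₀) R μ) ⊔ 1 with hD
    have hDt : D ≠ ∞ := by
      rw [hD]
      refine (max_lt ?_ (by simp [lt_top_iff_ne_top])).ne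
      exact (Finset.sup_lt_iff (by simp [lt_top_iff_ne_top] : (⊥:ℝ≥0∞) < ∞)).2
        fun n _ => ((hu n).sub hu₀).2
    refine ⟨D + eLpNorm u₀ R μ, ENNReal.add_ne_top.2 ⟨hDt, hu₀.2.ne⟩, ?_⟩
    intro n
    have h1 : eLpNorm (u n - u₀) R μ ≤ D := by
      rcases lt_or_ge n n₀ with hn | hn
      · exact le_sup_of_le_left
          (Finset.le_sup (f := fun k => eLpNorm (u k - u₀) R μ) (Finset.mem_range.2 hn))
      · exact le_sup_of_le_right (hn₀ n hn).le
    calc eLpNorm (u n) R μ = eLpNorm ((u n - u₀) + u₀) R μ := by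
          congr 1; ext x; simp
      _ ≤ eLpNorm (u n - u₀) R μ + eLpNorm u₀ R μ :=
          eLpNorm_add_le ((hu n).sub hu₀).1 hu₀.1 hR1
      _ ≤ D + eLpNorm u₀ R μ := add_le_add_left h1 _
  obtain ⟨C, hC⟩ := hvbdd
  -- bound on the L^q norm of f ∘ (u n, v n)
  set M : ℝ≥0∞ := ‖a₁‖₊ * (C : ℝ≥0∞) ^ (p / q) + (‖a₂‖₊ * U ^ (r - 1) + eLpNorm α₁ Q μ)
    with hM
  have hMt : M ≠ ∞ := by
    rw [hM]
    refine ENNReal.add_ne_top.2 ⟨?_, ENNReal.add_ne_top.2 ⟨?_, hα₁.2.ne⟩⟩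
    · exact ENNReal.mul_ne_top ENNReal.coe_ne_top
        (ENNReal.rpow_ne_top_of_nonneg hpq_pos.le ENNReal.coe_ne_top)
    · exact ENNReal.mul_ne_top ENNReal.coe_ne_top
        (ENNReal.rpow_ne_top_of_nonneg hr1.le hUt)
  have hrpow_cont : Continuous fun t : ℝ => t ^ (p / q) := by
    rw [continuous_iff_continuousAt]
    intro x
    exact Real.continuousAt_rpow_const x _ (Or.inr hpq_pos.le)
  have hrpow_cont' : Continuous fun t : ℝ => t ^ (r - 1) := by
    rw [continuous_iff_continuousAt]
    intro x
    exact Real.continuousAt_rpow_const x _ (Or.inr hr1.le)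
  have hA : ∀ n, AEStronglyMeasurable (fun x => a₁ * ‖v n x‖ ^ (p / q)) μ := fun n =>
    (aestronglyMeasurable_const.mul ((hrpow_cont.comp_aestronglyMeasurable (hv n).1.norm)))
  have hB : ∀ n, AEStronglyMeasurable (fun x => a₂ * |u n x| ^ (r - 1)) μ := by
    intro n
    have : AEStronglyMeasurable (fun x => |u n x|) μ := by
      simpa [Real.norm_eq_abs] using (hu n).1.norm
    exact aestronglyMeasurable_const.mul (hrpow_cont'.comp_aestronglyMeasurable this)
  have hCα : AEStronglyMeasurable (fun x => |α₁ x|) μ := by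
    simpa [Real.norm_eq_abs] using hα₁.1.norm
  have hbound : ∀ n, eLpNorm (fun x => f x (u n x) (v n x)) Q μ ≤ M := by
    intro n
    have hptw : ∀ᵐ x ∂μ, ‖f x (u n x) (v n x)‖ ≤
        a₁ * ‖v n x‖ ^ (p / q) + (a₂ * |u n x| ^ (r - 1) + |α₁ x|) := by
      filter_upwards [hgrowth] with x hx
      rw [Real.norm_eq_abs]
      calc |f x (u n x) (v n x)| ≤ a₁ * ‖v n x‖ ^ (p * (r - 1) / r) + a₂ * |u n x| ^ (r - 1) + α₁ x :=
            hx (u n x) (v n x)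
        _ ≤ a₁ * ‖v n x‖ ^ (p / q) + (a₂ * |u n x| ^ (r - 1) + |α₁ x|) := by
            rw [hexp]; have := le_abs_self (α₁ x); linarith
    calc eLpNorm (fun x => f x (u n x) (v n x)) Q μ
        ≤ eLpNorm (fun x => a₁ * ‖v n x‖ ^ (p / q) + (a₂ * |u n x| ^ (r - 1) + |α₁ x|)) Q μ :=
          eLpNorm_mono_ae_real hptw
      _ ≤ eLpNorm (fun x => a₁ * ‖v n x‖ ^ (p / q)) Q μ +
          eLpNorm (fun x => a₂ * |u n x| ^ (r - 1) + |α₁ x|) Q μ :=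
          eLpNorm_add_le (hA n) ((hB n).add hCα) hQ1
      _ ≤ eLpNorm (fun x => a₁ * ‖v n x‖ ^ (p / q)) Q μ +
          (eLpNorm (fun x => a₂ * |u n x| ^ (r - 1)) Q μ + eLpNorm (fun x => |α₁ x|) Q μ) :=
          add_le_add_right (eLpNorm_add_le (hB n) hCα hQ1) _
      _ ≤ M := by
          rw [hM]
          gcongr
          · -- a₁ term
            have h1 : (fun x => a₁ * ‖v n x‖ ^ (p / q)) = a₁ • (fun x => ‖v n x‖ ^ (p / q)) := by
              ext x; simp
            rw [h1, eLpNorm_const_smul, eLpNorm_norm_rpow _ hpq_pos, hQmul1]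
            gcongr
            · exact (enorm_eq_nnnorm a₁).le
            exact hC n
          · -- a₂ term
            have h1 : (fun x => a₂ * |u n x| ^ (r - 1)) = a₂ • (fun x => ‖u n x‖ ^ (r - 1)) := by
              ext x; simp [Real.norm_eq_abs]
            rw [h1, eLpNorm_const_smul, eLpNorm_norm_rpow _ hr1, hQmul2]
            gcongr
            · exact (enorm_eq_nnnorm a₂).le
            exact hUb n
          · -- α₁ term
            have : (fun x => |α₁ x|) = fun x => ‖α₁ x‖ := by ext x; simp [Real.norm_eq_abs]
            rw [this, eLpNorm_norm]
  -- the key inequality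
  have key : ∀ n, ‖∫ x in Ω, f x (u n x) (v n x) * (u n x - u₀ x)‖ ≤
      (M * eLpNorm (u n - u₀) R μ).toReal := by
    intro n
    have h1 : ‖∫ x in Ω, f x (u n x) (v n x) * (u n x - u₀ x)‖ ≤
        (eLpNorm (fun x => f x (u n x) (v n x) * (u n x - u₀ x)) 1 μ).toReal := by
      rw [eLpNorm_one_eq_lintegral_enorm]
      refine (norm_integral_le_lintegral_norm _).trans ?_
      simp_rw [ofReal_norm]
      rw [hμ]
    refine h1.trans ?_
    have hd : AEStronglyMeasurable (u n - u₀) μ := ((hu n).sub hu₀).1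
    have hH : eLpNorm (fun x => f x (u n x) (v n x) * (u n x - u₀ x)) 1 μ ≤
        eLpNorm (fun x => f x (u n x) (v n x)) Q μ * eLpNorm (u n - u₀) R μ := by
      have := eLpNorm_smul_le_mul_eLpNorm (μ := μ) (p := Q) (q := R) (r := 1)
        hd (hFmeas n) (hpqr := ⟨by simpa [one_div] using hconj.symm⟩)
      simpa [Pi.smul_apply', smul_eq_mul, Pi.mul_def] using this
    refine ENNReal.toReal_mono ?_ (hH.trans ?_)
    · exact ENNReal.mul_ne_top hMt ((hu n).sub hu₀).2.ne
    · exact mul_le_mul_left (hbound n) _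
  -- conclude by squeezing
  have hlim : Tendsto (fun n => (M * eLpNorm (u n - u₀) R μ).toReal) atTop (nhds 0) := by
    have h1 : Tendsto (fun n => M * eLpNorm (u n - u₀) R μ) atTop (nhds (M * 0)) :=
      ENNReal.Tendsto.const_mul huconv (Or.inr hMt)
    rw [mul_zero] at h1
    exact (ENNReal.tendsto_toReal (by simp : (0:ℝ≥0∞) ≠ ∞)).comp h1
  exact squeeze_zero_norm key hlim
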